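/- Let β ≥ 1. Then for every x > 0 the inequality ψ(x + β) ≤ ln x + (β − 1/2)/x holds. -/

import Mathlib

open Real

/-- The psi (digamma) function: the derivative of `ln ∘ Γ`. -/
noncomputable def psi : ℝ → ℝ := deriv (fun x : ℝ => Real.log (Real.Gamma x))

private lemma log_le_half_sub (s : ℝ) (hs : 1 ≤ s) : Real.log s ≤ (s - s⁻¹) / 2 := by
  have h0 : (0:ℝ) < s := lt_of_lt_of_le one_pos hs
  have h1 : 0 ≤ Real.log s := Real.log_nonneg hs
  have h2 : Real.log s ≤ Real.sinh (Real.log s) := by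
    rcases h1.eq_or_lt with h | h
    · rw [← h, Real.sinh_zero]
    · exact (Real.self_lt_sinh_iff.mpr h).le
  rwa [Real.sinh_log h0] at h2

private lemma diffLG {y : ℝ} (hy : 0 < y) :
    DifferentiableAt ℝ (fun x : ℝ => Real.log (Real.Gamma x)) y := by
  have hne : ∀ m : ℕ, y ≠ -m := by
    intro m
    have : -(m:ℝ) ≤ 0 := neg_nonpos.mpr (Nat.cast_nonneg m)
    exact fun h => absurd hy (by rw [h]; exact not_lt.mpr this)
  exact (Real.differentiableAt_Gamma hne).log (Real.Gamma_pos_of_pos hy).ne'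

private lemma psi_le_log {y : ℝ} (hy : 0 < y) : psi y ≤ Real.log y := by
  have h := Real.convexOn_log_Gamma.deriv_le_slope (Set.mem_Ioi.mpr hy)
    (Set.mem_Ioi.mpr (by linarith : (0:ℝ) < y + 1)) (by linarith) (diffLG hy)
  rw [slope_def_field] at h
  have hG := (Real.Gamma_pos_of_pos hy)
  have : (Real.log ∘ Real.Gamma) (y + 1) - (Real.log ∘ Real.Gamma) y = Real.log y := by
    simp only [Function.comp_apply, Real.Gamma_add_one hy.ne', Real.log_mul hy.ne' hG.ne']
    ring
  calc psi y = deriv (Real.log ∘ Real.Gamma) y := rfl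
    _ ≤ _ := h
    _ = Real.log y := by rw [this]; simp

private lemma psi_add_one {y : ℝ} (hy : 0 < y) : psi (y + 1) = psi y + 1 / y := by
  have h1 : HasDerivAt (fun x : ℝ => Real.log (Real.Gamma (x + 1))) (psi (y + 1)) y := by
    have := ((diffLG (by linarith : (0:ℝ) < y + 1)).hasDerivAt.comp y
      ((hasDerivAt_id y).add_const 1))
    simpa [psi, Function.comp_def] using this
  have h2 : HasDerivAt (fun x : ℝ => Real.log x + Real.log (Real.Gamma x))
      (y⁻¹ + psi y) y :=
    (Real.hasDerivAt_log hy.ne').add (diffLG hy).hasDerivAt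
  have heq : (fun x : ℝ => Real.log (Real.Gamma (x + 1))) =ᶠ[nhds y]
      (fun x : ℝ => Real.log x + Real.log (Real.Gamma x)) := by
    filter_upwards [Ioi_mem_nhds hy] with t ht
    have ht : (0:ℝ) < t := ht
    rw [Real.Gamma_add_one ht.ne', Real.log_mul ht.ne' (Real.Gamma_pos_of_pos ht).ne']
  have := (h1.congr_of_eventuallyEq heq.symm).unique h2
  rw [this, one_div]
  exact add_comm _ _

private lemma psi_shift {y : ℝ} (hy : 0 < y) (n : ℕ) :
    psi (y + n) = psi y + ∑ k ∈ Finset.range n, 1 / (y + k) := by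
  induction n with
  | zero => simp
  | succ n ih =>
    have hyn : (0:ℝ) < y + n := by positivity
    have : y + (n + 1 : ℕ) = (y + n) + 1 := by push_cast; ring
    rw [this, psi_add_one hyn, ih, Finset.sum_range_succ]
    ring

private lemma pade {a : ℝ} (ha : 0 < a) :
    Real.log (a + 1) - Real.log a ≤ (1 / a + 1 / (a + 1)) / 2 := by
  have ha1 : (0:ℝ) < a + 1 := by linarith
  have hs : (1:ℝ) ≤ (a + 1) / a := by
    rw [le_div_iff₀ ha]; linarith
  have h := log_le_half_sub _ hs
  rw [Real.log_div ha1.ne' ha.ne'] at h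
  have : ((a + 1) / a - ((a + 1) / a)⁻¹) / 2 = (1 / a + 1 / (a + 1)) / 2 := by
    rw [inv_div]
    field_simp
    ring
  linarith [this ▸ h]

private lemma sum_bound {z : ℝ} (hz : 0 < z) (n : ℕ) :
    Real.log (z + n) - Real.log z + 1 / (2 * z) - 1 / (2 * (z + n)) ≤
      ∑ k ∈ Finset.range n, 1 / (z + k) := by
  induction n with
  | zero => simp
  | succ n ih =>
    have hzn : (0:ℝ) < z + n := by positivity
    have hp := pade hzn
    rw [Finset.sum_range_succ]
    have hcast : z + ((n:ℝ) + 1) = (z + n) + 1 := by ring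
    push_cast
    rw [hcast]
    have h1 : 1 / (2 * (z + n)) = 1 / (z + n) - 1 / (2 * (z + n)) := by
      field_simp; ring
    have hzn1 : (0:ℝ) < z + n + 1 := by linarith
    have : 1 / (2 * (z + ↑n)) - 1 / (2 * (z + ↑n + 1)) =
        (1 / (z + n) + 1 / (z + n + 1)) / 2 - (1 / (z + n + 1)) := by
      field_simp
      ring
    linarith

private lemma psi_le {z : ℝ} (hz : 0 < z) :
    psi z ≤ Real.log z - 1 / (2 * z) := by
  have key : ∀ n : ℕ, psi z ≤ Real.log z - 1 / (2 * z) + 1 / (2 * (z + n)) := by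
    intro n
    have hzn : (0:ℝ) < z + n := by positivity
    have h1 : psi (z + n) ≤ Real.log (z + n) := psi_le_log hzn
    have h2 := psi_shift hz n
    have h3 := sum_bound hz n
    linarith
  have hA : Filter.Tendsto (fun n : ℕ => 2 * (z + (n:ℝ))) Filter.atTop Filter.atTop :=
    Filter.Tendsto.const_mul_atTop two_pos
      (Filter.tendsto_atTop_add_const_left _ z tendsto_natCast_atTop_atTop)
  have ht : Filter.Tendsto (fun n : ℕ => Real.log z - 1 / (2 * z) + 1 / (2 * (z + n)))
      Filter.atTop (nhds (Real.log z - 1 / (2 * z))) := by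
    simpa [one_div] using (tendsto_const_nhds.add hA.inv_tendsto_atTop)
  exact ge_of_tendsto' ht key

theorem stmt_8 (β : ℝ) (hβ : 1 ≤ β) (x : ℝ) (hx : 0 < x) :
    psi (x + β) ≤ Real.log x + (β - 1 / 2) / x := by
  have hβ0 : (0:ℝ) < β := lt_of_lt_of_le one_pos hβ
  have hz : (0:ℝ) < x + β := by linarith
  have h1 := psi_le hz
  have hs : (1:ℝ) ≤ (x + β) / x := by rw [le_div_iff₀ hx]; linarith
  have h2 := log_le_half_sub _ hs
  rw [Real.log_div hz.ne' hx.ne'] at h2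
  have h3 : ((x + β) / x - ((x + β) / x)⁻¹) / 2 = β * (2 * x + β) / (2 * x * (x + β)) := by
    rw [inv_div]; field_simp; ring
  rw [h3] at h2
  have key : β * (2 * x + β) / (2 * x * (x + β)) - 1 / (2 * (x + β)) ≤ (β - 1 / 2) / x := by
    rw [div_sub_div _ _ (by positivity : (2 * x * (x + β)) ≠ 0) (by positivity : (2 * (x + β)) ≠ 0),
      div_le_div_iff₀ (by positivity) hx]
    nlinarith [mul_nonneg (mul_nonneg hx.le hz.le) (mul_nonneg hβ0.le (sub_nonneg.mpr hβ))]
  linarith
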